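/- Let n ≥ 1 and 1 ≤ k ≤ n. Let f_1,…,f_m ∈ ℝ[x_1,…,x_n] be polynomials each of which belongs to the ℝ-subalgebra of ℝ[x_1,…,x_n] generated by the even power sums s_2, s_4, …, s_{2k}. If the real variety X = {x ∈ ℝ^n : f_1(x) = ⋯ = f_m(x) = 0} is nonempty, then there exists a point x ∈ X whose nonzero coordinates take at most k distinct absolute values, i.e. the set {|x_i| : 1 ≤ i ≤ n, x_i ≠ 0} has cardinality at most k. -/

import Mathlib

open MvPolynomial

open Finset RealInnerProductSpace in
lemma exists_ann (k : ℕ) (W : Finset ℝ) (hcard : k < W.card) :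
    ∃ e : {a // a ∈ W} → ℝ,
      (∀ i : ℕ, i < k → ∑ a : {a // a ∈ W}, (a : ℝ) ^ i * e a = 0) ∧
      ∑ a : {a // a ∈ W}, (a : ℝ) ^ k * e a ≠ 0 := by
  classical
  set ι := {a // a ∈ W}
  let r : Fin k → EuclideanSpace ℝ ι := fun i => WithLp.toLp 2 (fun a => (a : ℝ) ^ (i : ℕ))
  let g : EuclideanSpace ℝ ι := WithLp.toLp 2 (fun a => (a : ℝ) ^ k)
  set K : Submodule ℝ (EuclideanSpace ℝ ι) := Submodule.span ℝ (Set.range r) with hK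
  have hgK : g ∉ K := by
    intro hg
    obtain ⟨c, hc⟩ := (Submodule.mem_span_range_iff_exists_fun ℝ).1 hg
    set P : Polynomial ℝ :=
      Polynomial.X ^ k - ∑ i : Fin k, Polynomial.C (c i) * Polynomial.X ^ (i : ℕ) with hP
    have heval : ∀ a : ι, P.eval (a : ℝ) = 0 := by
      intro a
      have hc' : ∑ i : Fin k, c i • (fun a : ι => (a : ℝ) ^ (i : ℕ)) =
          (fun a : ι => (a : ℝ) ^ k) := by
        have := congrArg WithLp.ofLp hc
        rw [WithLp.ofLp_sum] at this
        simpa only [WithLp.ofLp_smul, WithLp.ofLp_toLp, r, g] using this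
      have h2 : ∑ i : Fin k, c i * (a : ℝ) ^ (i : ℕ) = (a : ℝ) ^ k := by
        simpa using congrFun hc' a
      simp [hP, Polynomial.eval_finset_sum, h2]
    have hdeg : P.natDegree < Fintype.card ι := by
      have h1 : P.natDegree ≤ k := by
        refine le_trans (Polynomial.natDegree_sub_le _ _) ?_
        simp only [max_le_iff, Polynomial.natDegree_X_pow, le_refl, true_and]
        refine Polynomial.natDegree_sum_le_of_forall_le _ _ fun i _ => ?_
        refine le_trans (Polynomial.natDegree_C_mul_le _ _) ?_
        simp [le_of_lt i.2]
      have h2 : Fintype.card ι = W.card := Fintype.card_coe W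
      omega
    have hP0 : P = 0 :=
      Polynomial.eq_zero_of_natDegree_lt_card_of_eval_eq_zero P Subtype.val_injective heval hdeg
    have : P.coeff k = 1 := by
      simp only [hP, Polynomial.coeff_sub, Polynomial.coeff_X_pow, if_pos rfl,
        Polynomial.finset_sum_coeff]
      have : ∀ i : Fin k, (Polynomial.C (c i) * Polynomial.X ^ (i : ℕ)).coeff k = 0 := by
        intro i
        rw [Polynomial.coeff_C_mul, Polynomial.coeff_X_pow, if_neg (by omega)]
        ring
      rw [Finset.sum_congr rfl (fun i _ => this i)]
      simp
    rw [hP0] at this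
    simp at this
  set d : EuclideanSpace ℝ ι := g - (K.orthogonalProjection g : EuclideanSpace ℝ ι) with hd
  have hdK : d ∈ Kᗮ := Submodule.sub_starProjection_mem_orthogonal (K := K) g
  have hd0 : d ≠ 0 := by
    intro h
    apply hgK
    have : g = (K.orthogonalProjection g : EuclideanSpace ℝ ι) := by
      have := sub_eq_zero.1 h
      exact this
    rw [this]
    exact SetLike.coe_mem _
  refine ⟨fun a => d a, ?_, ?_⟩
  · intro i hi
    have hr : r ⟨i, hi⟩ ∈ K := Submodule.subset_span ⟨⟨i, hi⟩, rfl⟩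
    have := hdK (r ⟨i, hi⟩) hr
    simp [PiLp.inner_apply, RCLike.inner_apply, conj_trivial, r, mul_comm] at this
    exact this
  · have hgd : ⟪g, d⟫ = ‖d‖ ^ 2 := by
      have hsplit : g = d + (K.orthogonalProjection g : EuclideanSpace ℝ ι) := by
        simp [hd]
      rw [hsplit, inner_add_left]
      have h1 : ⟪((K.orthogonalProjection g : EuclideanSpace ℝ ι)), d⟫ = 0 :=
        hdK _ (SetLike.coe_mem _)
      rw [h1, real_inner_self_eq_norm_sq]
      ring
    have : ⟪g, d⟫ ≠ 0 := by
      rw [hgd]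
      exact pow_ne_zero _ (norm_ne_zero_iff.2 hd0)
    have hform : ⟪g, d⟫ = ∑ a : ι, (a : ℝ) ^ k * d a := by
      simp [PiLp.inner_apply, RCLike.inner_apply, conj_trivial, g, Finset.univ_eq_attach, mul_comm]
    intro hcon
    apply this
    rw [hform]
    exact hcon

lemma range_top (k : ℕ) (W : Finset ℝ) (hcard : k < W.card) (mult : {a // a ∈ W} → ℕ)
    (hm : ∀ a, 0 < mult a) :
    LinearMap.range (ContinuousLinearMap.pi (fun i : Fin k =>
      ∑ a : {a // a ∈ W}, ((mult a : ℝ) * ((((i : ℕ) : ℝ) + 1) * (a : ℝ) ^ (i : ℕ))) •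
        ContinuousLinearMap.proj (R := ℝ) (φ := fun _ : {a // a ∈ W} => ℝ) a) : ({a // a ∈ W} → ℝ) →ₗ[ℝ] (Fin k → ℝ)) = ⊤ := by
  classical
  have triv : True := trivial
  set c : Fin k → {a // a ∈ W} → ℝ :=
    fun i a => (mult a : ℝ) * ((((i : ℕ) : ℝ) + 1) * (a : ℝ) ^ (i : ℕ)) with hc
  set Φ' : ({a // a ∈ W} → ℝ) →L[ℝ] (Fin k → ℝ) := ContinuousLinearMap.pi (fun i : Fin k =>
      ∑ a : {a // a ∈ W}, (c i a) • ContinuousLinearMap.proj (R := ℝ) (φ := fun _ : {a // a ∈ W} => ℝ) a) with hΦ'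
  have happ : ∀ (v' : {a // a ∈ W} → ℝ) (i : Fin k), Φ' v' i = ∑ a : {a // a ∈ W}, c i a * v' a := by
    intro v' i
    simp [hΦ', ContinuousLinearMap.pi_apply, ContinuousLinearMap.sum_apply]
  have hcardι : k ≤ Fintype.card {a // a ∈ W} := by
    rw [Fintype.card_coe]; omega
  obtain ⟨s⟩ : Nonempty (Fin k ↪ {a // a ∈ W}) :=
    Function.Embedding.nonempty_of_card_le (by simpa using hcardι)
  set u : Fin k → ({a // a ∈ W} → ℝ) := fun j => Pi.single (s j) 1 with hu
  have huval : ∀ j i, Φ' (u j) i = c i (s j) := by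
    intro j i
    rw [happ]
    simp [hu, Pi.single_apply, mul_ite, Finset.sum_ite_eq']
  have li : LinearIndependent ℝ (fun j => Φ' (u j)) := by
    rw [Fintype.linearIndependent_iff]
    intro gc hgc
    have hv : (fun j => gc j * (mult (s j) : ℝ)) = 0 := by
      apply Matrix.eq_zero_of_forall_pow_sum_mul_pow_eq_zero
        (f := fun j => (s j : ℝ))
      · exact Subtype.val_injective.comp s.injective
      · intro i
        have h0 := congrFun hgc i
        simp only [Finset.sum_apply, Pi.smul_apply, smul_eq_mul, Pi.zero_apply] at h0
        have h1 : ∑ j, gc j * Φ' (u j) i =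
            ((((i : ℕ) : ℝ) + 1)) * ∑ j, (gc j * (mult (s j) : ℝ)) * (s j : ℝ) ^ (i : ℕ) := by
          rw [Finset.mul_sum]
          refine Finset.sum_congr rfl fun j _ => ?_
          rw [huval, hc]
          ring
        rw [h0] at h1
        have hne : ((((i : ℕ) : ℝ) + 1)) ≠ 0 := by positivity
        field_simp at h1
        rcases mul_eq_zero.1 h1.symm with h | h
        · exact absurd h hne
        · exact h
    intro j
    have := congrFun hv j
    simp only [Pi.zero_apply, mul_eq_zero] at this
    rcases this with h | h
    · exact h
    · exact absurd h (by exact_mod_cast (hm (s j)).ne')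
  have hsp : Submodule.span ℝ (Set.range fun j => Φ' (u j)) = ⊤ := by
    refine li.span_eq_top_of_card_eq_finrank' ?_
    simp [Module.finrank_fin_fun]
  rw [eq_top_iff, ← hsp]
  refine Submodule.span_le.2 ?_
  rintro _ ⟨j, rfl⟩
  exact LinearMap.mem_range_self (Φ' : ({a // a ∈ W} → ℝ) →ₗ[ℝ] (Fin k → ℝ)) (u j)

set_option maxHeartbeats 1000000 in
lemma key_min (k : ℕ) (hk : 0 < k) (n : ℕ) (x0 : Fin n → ℝ) :
    ∃ x : Fin n → ℝ,
      (∀ i : Fin k, ∑ l, x l ^ (2 * ((i : ℕ) + 1)) = ∑ l, x0 l ^ (2 * ((i : ℕ) + 1))) ∧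
      ((fun i => |x i|) '' {i | x i ≠ 0}).ncard ≤ k := by
  classical
  -- the constraint set
  set S : Set (Fin n → ℝ) :=
    {y | ∀ i : Fin k, ∑ l, y l ^ (2 * ((i : ℕ) + 1)) = ∑ l, x0 l ^ (2 * ((i : ℕ) + 1))} with hS
  have hx0S : x0 ∈ S := fun i => rfl
  have hcont : ∀ p : ℕ, Continuous (fun y : Fin n → ℝ => ∑ l, y l ^ p) := fun p =>
    continuous_finset_sum _ fun l _ => (continuous_apply l).pow p
  have hclosed : IsClosed S := by
    have : S = ⋂ i : Fin k,
        {y : Fin n → ℝ | ∑ l, y l ^ (2 * ((i : ℕ) + 1)) = ∑ l, x0 l ^ (2 * ((i : ℕ) + 1))} := by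
      ext y; simp [hS, Set.mem_iInter]
    rw [this]
    exact isClosed_iInter fun i => isClosed_eq (hcont _) continuous_const
  have hbdd : Bornology.IsBounded S := by
    rw [isBounded_iff_forall_norm_le]
    refine ⟨Real.sqrt (∑ l, x0 l ^ (2 * ((⟨0, hk⟩ : Fin k) : ℕ) + 2)), fun y hy => ?_⟩
    have h2 : ∑ l, y l ^ 2 = ∑ l, x0 l ^ (2 * ((⟨0, hk⟩ : Fin k) : ℕ) + 2) := by
      have := hy ⟨0, hk⟩
      simpa using this
    rw [pi_norm_le_iff_of_nonneg (Real.sqrt_nonneg _)]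
    intro l
    have h3 : y l ^ 2 ≤ ∑ l, x0 l ^ (2 * ((⟨0, hk⟩ : Fin k) : ℕ) + 2) := by
      rw [← h2]
      exact Finset.single_le_sum (f := fun l => y l ^ 2) (fun _ _ => sq_nonneg _) (Finset.mem_univ l)
    calc ‖y l‖ = Real.sqrt ((y l) ^ 2) := by rw [Real.sqrt_sq_eq_abs]; rfl
      _ ≤ _ := Real.sqrt_le_sqrt h3
  have hScomp : IsCompact S := Metric.isCompact_of_isClosed_isBounded hclosed hbdd
  obtain ⟨x, hxS, hxmin⟩ :=
    hScomp.exists_isMinOn ⟨x0, hx0S⟩ ((hcont (2 * (k + 1))).continuousOn)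
  refine ⟨x, fun i => hxS i, ?_⟩
  by_contra hbig
  push_neg at hbig
  -- Finsets of values
  set s : Finset (Fin n) := Finset.univ.filter (fun l => x l ≠ 0) with hs
  set W : Finset ℝ := s.image (fun l => (x l) ^ 2) with hW
  have hA : ((fun i => |x i|) '' {i | x i ≠ 0}) = ↑(s.image fun l => |x l|) := by
    rw [Finset.coe_image]
    congr 1
    ext l
    simp [hs]
  have hcardAW : (s.image fun l => |x l|).card = W.card := by
    have himg : W = (s.image fun l => |x l|).image (fun t => t ^ 2) := by
      rw [hW, Finset.image_image]
      apply Finset.image_congr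
      intro l _
      simp [Function.comp, sq_abs, abs_abs]
    have hinj : Set.InjOn (fun t : ℝ => t ^ 2) ↑(s.image fun l => |x l|) := by
      intro t ht u hu htu
      simp only [Finset.mem_coe, Finset.mem_image] at ht hu
      obtain ⟨l1, -, rfl⟩ := ht
      obtain ⟨l2, -, rfl⟩ := hu
      have h1 : Real.sqrt (|x l1| ^ 2) = Real.sqrt (|x l2| ^ 2) := by
        simp only at htu
        rw [htu]
      rwa [Real.sqrt_sq (abs_nonneg _), Real.sqrt_sq (abs_nonneg _)] at h1
    rw [himg]
    exact (Finset.card_image_of_injOn hinj).symm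
  have hcardW : k < W.card := by
    rw [hA, Set.ncard_coe_finset, hcardAW] at hbig
    exact hbig
  have hposW : ∀ a ∈ W, (0 : ℝ) < a := by
    intro a ha
    rw [hW] at ha
    simp only [Finset.mem_image, hs, Finset.mem_filter, Finset.mem_univ, true_and] at ha
    obtain ⟨l, hl, rfl⟩ := ha
    exact lt_of_le_of_ne (sq_nonneg _) (Ne.symm (pow_ne_zero 2 hl))
  -- multiplicities
  set mult : {a // a ∈ W} → ℕ := fun a => (s.filter (fun l => (x l) ^ 2 = (a : ℝ))).card
    with hmult
  have hmultpos : ∀ a, 0 < mult a := by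
    rintro ⟨a, ha⟩
    rw [hW] at ha
    simp only [Finset.mem_image] at ha
    obtain ⟨l, hl, hla⟩ := ha
    refine Finset.card_pos.2 ⟨l, ?_⟩
    simp [hl, hla]
  have hmultne : ∀ a, (mult a : ℝ) ≠ 0 := fun a => by
    exact_mod_cast (hmultpos a).ne'
  -- regrouping sums
  have regroup : ∀ u : ℝ → ℝ, u 0 = 0 →
      ∑ l, u ((x l) ^ 2) = ∑ a : {a // a ∈ W}, (mult a : ℝ) * u (a : ℝ) := by
    intro u hu0
    have h1 : ∑ l, u ((x l) ^ 2) = ∑ l ∈ s, u ((x l) ^ 2) := by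
      symm
      apply Finset.sum_subset (Finset.subset_univ s)
      intro l _ hl
      have hx0 : x l = 0 := by
        by_contra hne
        exact hl (by simp [hs, hne])
      simp [hx0, hu0]
    rw [h1, Finset.sum_comp (fun t : ℝ => u t) (fun l => (x l) ^ 2), ← hW,
      Finset.univ_eq_attach]
    simp only [hmult]
    rw [Finset.sum_attach W (fun b => ((s.filter fun l => (x l) ^ 2 = b).card : ℝ) * u b)]
    exact Finset.sum_congr rfl fun b _ => (nsmul_eq_mul _ _)
  -- base point, constraint map, objective
  set v0 : {a // a ∈ W} → ℝ := fun a => (a : ℝ) with hv0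
  set Φ : ({a // a ∈ W} → ℝ) → (Fin k → ℝ) :=
    fun v i => ∑ a : {a // a ∈ W}, (mult a : ℝ) * (v a) ^ ((i : ℕ) + 1) with hΦ
  have hasD : ∀ (p : ℕ) (w : {a // a ∈ W} → ℝ),
      HasStrictFDerivAt
        (fun v : {a // a ∈ W} → ℝ => ∑ a : {a // a ∈ W}, (mult a : ℝ) * (v a) ^ p)
        (∑ a : {a // a ∈ W}, ((mult a : ℝ) * ((p : ℝ) * (w a) ^ (p - 1))) •
          ContinuousLinearMap.proj (R := ℝ) (φ := fun _ : {a // a ∈ W} => ℝ) a) w := by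
    intro p w
    apply HasStrictFDerivAt.fun_sum
    intro a _
    have h1 : HasStrictDerivAt (fun t : ℝ => (mult a : ℝ) * t ^ p)
        ((mult a : ℝ) * ((p : ℝ) * (w a) ^ (p - 1))) (w a) :=
      (hasStrictDerivAt_pow p (w a)).const_mul _
    have h2 : HasStrictFDerivAt (fun f : {a // a ∈ W} → ℝ => f a)
        (ContinuousLinearMap.proj (R := ℝ) (φ := fun _ : {a // a ∈ W} => ℝ) a) w :=
      (ContinuousLinearMap.proj (R := ℝ) (φ := fun _ : {a // a ∈ W} => ℝ) a).hasStrictFDerivAt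
    have h3 := h1.comp_hasStrictFDerivAt w h2
    exact h3
  set Φ' : ({a // a ∈ W} → ℝ) →L[ℝ] (Fin k → ℝ) := ContinuousLinearMap.pi (fun i : Fin k =>
      ∑ a : {a // a ∈ W},
        ((mult a : ℝ) * (((((i : ℕ) + 1) : ℕ) : ℝ) * (v0 a) ^ (((i : ℕ) + 1) - 1))) •
        ContinuousLinearMap.proj (R := ℝ) (φ := fun _ : {a // a ∈ W} => ℝ) a) with hPhi'
  have hstrict : HasStrictFDerivAt Φ Φ' v0 := by
    rw [hΦ, hPhi']
    exact hasStrictFDerivAt_pi.2 fun i => hasD ((i : ℕ) + 1) v0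
  have hrange : LinearMap.range (Φ' : ({a // a ∈ W} → ℝ) →ₗ[ℝ] (Fin k → ℝ)) = ⊤ := by
    have h0 := range_top k W hcardW mult hmultpos
    have heq : Φ' = ContinuousLinearMap.pi (fun i : Fin k =>
        ∑ a : {a // a ∈ W}, ((mult a : ℝ) * ((((i : ℕ) : ℝ) + 1) * (a : ℝ) ^ (i : ℕ))) •
          ContinuousLinearMap.proj (R := ℝ) (φ := fun _ : {a // a ∈ W} => ℝ) a) := by
      rw [hPhi']
      congr 1
      funext i
      refine Finset.sum_congr rfl fun a _ => ?_
      congr 1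
      rw [hv0]
      push_cast
      ring
    rw [heq]
    exact h0
  have happly : ∀ (C : {a // a ∈ W} → ℝ) (v : {a // a ∈ W} → ℝ),
      (∑ a : {a // a ∈ W}, (C a) •
        ContinuousLinearMap.proj (R := ℝ) (φ := fun _ : {a // a ∈ W} => ℝ) a) v
        = ∑ a : {a // a ∈ W}, C a * v a := by
    intro C v
    rw [ContinuousLinearMap.sum_apply]
    refine Finset.sum_congr rfl fun a _ => ?_
    rw [ContinuousLinearMap.smul_apply, ContinuousLinearMap.proj_apply, smul_eq_mul]
  -- the kernel direction
  obtain ⟨e, he1, he2⟩ := exists_ann k W hcardW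
  set dvec : {a // a ∈ W} → ℝ := fun a => e a / (mult a : ℝ) with hdvec
  have hmd : ∀ a, (mult a : ℝ) * dvec a = e a := fun a => by
    rw [hdvec, mul_comm]
    exact div_mul_cancel₀ (e a) (hmultne a)
  have hker : dvec ∈ LinearMap.ker (Φ' : ({a // a ∈ W} → ℝ) →ₗ[ℝ] (Fin k → ℝ)) := by
    rw [LinearMap.mem_ker]
    have hco : ∀ i : Fin k, Φ' dvec i = 0 := by
      intro i
      have h5 : Φ' dvec i = ∑ a : {a // a ∈ W},
          ((mult a : ℝ) * (((((i : ℕ) + 1) : ℕ) : ℝ) * (v0 a) ^ (((i : ℕ) + 1) - 1))) * dvec a := by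
        rw [hPhi']
        rw [ContinuousLinearMap.pi_apply]
        exact happly _ _
      rw [h5]
      have h6 : ∀ a : {a // a ∈ W},
          ((mult a : ℝ) * (((((i : ℕ) + 1) : ℕ) : ℝ) * (v0 a) ^ (((i : ℕ) + 1) - 1))) * dvec a
            = ((((i : ℕ) + 1 : ℕ)) : ℝ) * ((a : ℝ) ^ (i : ℕ) * e a) := by
        intro a
        rw [← hmd a, hv0, Nat.add_sub_cancel]
        ring
      rw [Finset.sum_congr rfl (fun a _ => h6 a), ← Finset.mul_sum, he1 (i : ℕ) i.2, mul_zero]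
    exact funext hco
  have hD1ne : (∑ a : {a // a ∈ W}, ((mult a : ℝ) * (((k + 1 : ℕ) : ℝ) * (v0 a) ^ ((k + 1) - 1))) •
      ContinuousLinearMap.proj (R := ℝ) (φ := fun _ : {a // a ∈ W} => ℝ) a) dvec ≠ 0 := by
    rw [happly]
    have h6 : ∀ a : {a // a ∈ W},
        ((mult a : ℝ) * (((k + 1 : ℕ) : ℝ) * (v0 a) ^ ((k + 1) - 1))) * dvec a
          = (((k + 1 : ℕ)) : ℝ) * ((a : ℝ) ^ k * e a) := by
      intro a
      rw [← hmd a, hv0, Nat.add_sub_cancel]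
      ring
    rw [Finset.sum_congr rfl (fun a _ => h6 a), ← Finset.mul_sum]
    exact mul_ne_zero (by positivity) he2
  -- the implicit-function curve
  set ψ := hstrict.implicitFunction Φ Φ' hrange with hψ
  set dhat : LinearMap.ker (Φ' : ({a // a ∈ W} → ℝ) →ₗ[ℝ] (Fin k → ℝ)) := ⟨dvec, hker⟩ with hdhat
  set γ : ℝ → ({a // a ∈ W} → ℝ) := fun z => ψ (Φ v0) (z • dhat) with hγ
  have hγ0 : γ 0 = v0 := by
    rw [hγ]
    simp only [zero_smul]
    exact hstrict.implicitFunction_apply_image hrange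
  have hγc : ∀ᶠ z : ℝ in nhds 0, Φ (γ z) = Φ v0 := by
    have hev := hstrict.map_implicitFunction_eq hrange
    have hcont2 : Filter.Tendsto (fun z : ℝ => (Φ v0, z • dhat)) (nhds 0)
        (nhds (Φ v0, (0 : LinearMap.ker (Φ' : ({a // a ∈ W} → ℝ) →ₗ[ℝ] (Fin k → ℝ))))) := by
      have hc3 : Continuous (fun z : ℝ => (Φ v0, z • dhat)) := by
        exact continuous_const.prodMk (continuous_id.smul continuous_const)
      have h0 : (fun z : ℝ => (Φ v0, z • dhat)) 0 = (Φ v0, (0 : LinearMap.ker (Φ' : ({a // a ∈ W} → ℝ) →ₗ[ℝ] (Fin k → ℝ)))) := by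
        simp
      rw [← h0]
      exact hc3.tendsto 0
    exact hcont2.eventually hev
  have hγderiv : HasStrictDerivAt γ dvec 0 := by
    have h1 := hstrict.to_implicitFunction hrange
    have h2 : HasStrictDerivAt (fun z : ℝ => z • dhat) dhat 0 := by
      simpa using (hasStrictDerivAt_id (0 : ℝ)).smul_const dhat
    have h3 := h1.comp_hasStrictDerivAt_of_eq 0 h2 (by simp)
    simpa [hγ, hψ, Function.comp, hdhat] using h3
  have hγcont : ContinuousAt γ 0 := hγderiv.hasDerivAt.continuousAt
  have hposev : ∀ᶠ z : ℝ in nhds 0, ∀ a, 0 < γ z a := by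
    have hU : IsOpen {v : {a // a ∈ W} → ℝ | ∀ a, 0 < v a} := by
      have hUeq : {v : {a // a ∈ W} → ℝ | ∀ a, 0 < v a}
          = Set.pi Set.univ (fun _ => Set.Ioi (0 : ℝ)) := by
        ext v
        simp [Set.mem_pi]
      rw [hUeq]
      exact isOpen_set_pi Set.finite_univ (fun _ _ => isOpen_Ioi)
    have hmem : γ 0 ∈ {v : {a // a ∈ W} → ℝ | ∀ a, 0 < v a} := by
      rw [hγ0, hv0]
      intro a
      exact hposW a a.2
    exact hγcont.eventually_mem (hU.mem_nhds hmem)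
  -- regrouped power sums of x
  have hx_regroup : ∀ p : ℕ, 0 < p →
      ∑ l, x l ^ (2 * p) = ∑ a : {a // a ∈ W}, (mult a : ℝ) * ((a : ℝ)) ^ p := by
    intro p hp
    have h7 := regroup (fun t => t ^ p) (by simp [zero_pow hp.ne'])
    calc ∑ l, x l ^ (2 * p) = ∑ l, ((x l) ^ 2) ^ p := by
          refine Finset.sum_congr rfl fun l _ => ?_
          rw [pow_mul]
      _ = _ := h7
  have hΦv0 : ∀ i : Fin k, Φ v0 i = ∑ l, x l ^ (2 * ((i : ℕ) + 1)) := by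
    intro i
    rw [hΦ]
    simp only []
    rw [hx_regroup ((i : ℕ) + 1) (by omega), hv0]
  -- local minimality of H
  set H : ℝ → ℝ := fun z => ∑ a : {a // a ∈ W}, (mult a : ℝ) * (γ z a) ^ (k + 1) with hH
  have hH0 : H 0 = ∑ l, x l ^ (2 * (k + 1)) := by
    rw [hH]
    simp only [hγ0]
    rw [hx_regroup (k + 1) (by omega), hv0]
  have hloc : IsLocalMin H 0 := by
    rw [IsLocalMin, IsMinFilter]
    filter_upwards [hγc, hposev] with z hz1 hz2
    have hmemW : ∀ l : Fin n, x l ≠ 0 → (x l) ^ 2 ∈ W := by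
      intro l h
      rw [hW]
      exact Finset.mem_image_of_mem _ (by simp [hs, h])
    set y : Fin n → ℝ := fun l =>
      if h : x l ≠ 0 then Real.sqrt (γ z ⟨(x l) ^ 2, hmemW l h⟩) else 0 with hy
    have hysum : ∀ p : ℕ, 0 < p →
        ∑ l, y l ^ (2 * p) = ∑ a : {a // a ∈ W}, (mult a : ℝ) * (γ z a) ^ p := by
      intro p hp
      set u2 : ℝ → ℝ := fun t => if h : t ∈ W then (γ z ⟨t, h⟩) ^ p else 0 with hu2
      have hu20 : u2 0 = 0 := by
        rw [hu2]
        simp only []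
        rw [dif_neg]
        intro h0
        exact absurd (hposW 0 h0) (lt_irrefl 0)
      have hpt : ∀ l, y l ^ (2 * p) = u2 ((x l) ^ 2) := by
        intro l
        by_cases h : x l ≠ 0
        · rw [hy]
          simp only [dif_pos h]
          rw [hu2]
          simp only [dif_pos (hmemW l h)]
          rw [pow_mul, Real.sq_sqrt (le_of_lt (hz2 _))]
        · push_neg at h
          have hyl : y l = 0 := by
            rw [hy]
            simp [h]
          rw [hyl, h, zero_pow (by omega : 2 * p ≠ 0),
            show ((0 : ℝ) ^ 2 : ℝ) = (0 : ℝ) by norm_num, hu20]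
      rw [Finset.sum_congr rfl (fun l _ => hpt l), regroup u2 hu20]
      refine Finset.sum_congr rfl fun a _ => ?_
      congr 1
      rw [hu2]
      simp only [dif_pos a.2, Subtype.coe_eta]
    have hyS : y ∈ S := by
      intro i
      rw [hysum ((i : ℕ) + 1) (by omega)]
      have h9 : ∑ a : {a // a ∈ W}, (mult a : ℝ) * (γ z a) ^ ((i : ℕ) + 1) = Φ v0 i :=
        congrFun hz1 i
      rw [h9, hΦv0 i]
      exact hxS i
    have hmin := isMinOn_iff.1 hxmin y hyS
    calc H 0 = ∑ l, x l ^ (2 * (k + 1)) := hH0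
      _ ≤ ∑ l, y l ^ (2 * (k + 1)) := hmin
      _ = H z := by rw [hysum (k + 1) (by omega)]
  -- derivative of H along the curve is nonzero, contradiction
  have hHd : HasDerivAt H
      ((∑ a : {a // a ∈ W}, ((mult a : ℝ) * (((k + 1 : ℕ) : ℝ) * (v0 a) ^ ((k + 1) - 1))) •
        ContinuousLinearMap.proj (R := ℝ) (φ := fun _ : {a // a ∈ W} => ℝ) a) dvec) 0 := by
    have h4 := hasD (k + 1) v0
    have h5 := h4.comp_hasStrictDerivAt_of_eq 0 hγderiv (by rw [hγ0])
    exact h5.hasDerivAt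
  exact hD1ne (hloc.hasDerivAt_eq_zero hHd)


/-- Theorem 1.2 for type `Bₙ`: a nonempty real variety defined by polynomials in
the even power sums `s₂, s₄, …, s_{2k}` contains a point whose nonzero coordinates
take at most `k` distinct absolute values. -/
theorem degree_principle_Bn
    (n : ℕ) (hn : 1 ≤ n) (k : ℕ) (hk1 : 1 ≤ k) (hkn : k ≤ n)
    (m : ℕ) (f : Fin m → MvPolynomial (Fin n) ℝ)
    (hf : ∀ j, f j ∈ Algebra.adjoin ℝ
      {p : MvPolynomial (Fin n) ℝ | ∃ i, 1 ≤ i ∧ i ≤ k ∧ p = psum (Fin n) ℝ (2 * i)})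
    (hX : ∃ x : Fin n → ℝ, ∀ j, eval x (f j) = 0) :
    ∃ x : Fin n → ℝ, (∀ j, eval x (f j) = 0) ∧
      (((fun i => |x i|) '' {i | x i ≠ 0}).ncard ≤ k) := by
  classical
  obtain ⟨x0, hx0⟩ := hX
  obtain ⟨x, hxc, hxcard⟩ := key_min k hk1 n x0
  refine ⟨x, ?_, hxcard⟩
  intro j
  have hgen : ∀ p ∈ {p : MvPolynomial (Fin n) ℝ | ∃ i, 1 ≤ i ∧ i ≤ k ∧ p = psum (Fin n) ℝ (2 * i)},
      eval x p = eval x0 p := by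
    rintro p ⟨i, hi1, hik, rfl⟩
    have h2 : ∀ y : Fin n → ℝ, eval y (psum (Fin n) ℝ (2 * i)) = ∑ l, y l ^ (2 * i) := by
      intro y
      simp [psum, eval_sum]
    rw [h2, h2]
    have h3 := hxc ⟨i - 1, by omega⟩
    have h4 : (((⟨i - 1, by omega⟩ : Fin k) : ℕ) + 1) = i := by
      simp only []
      omega
    rwa [h4] at h3
  have hkey : eval x (f j) = eval x0 (f j) := by
    refine Algebra.adjoin_induction
      (p := fun q _ => eval x q = eval x0 q)
      (fun q hq => hgen q hq)
      (fun r => by simp)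
      (fun q1 q2 _ _ h1 h2 => by simp [h1, h2])
      (fun q1 q2 _ _ h1 h2 => by simp [h1, h2])
      (hf j)
  rw [hkey, hx0 j]
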